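/- arXiv:2104.11789 — 2 statements merged into one kernel-verified Lean document; each statement's English description precedes it below -/
import Mathlib

section
/- Let A ∈ ℝ^{m×m} be symmetric positive semidefinite and f ∈ ℝ^m. The function d(γ) = −(1/(4γ)) fᵀ (γ^{-1} I + A)^{-1} f, defined for γ > 0, is nondecreasing in γ. Consequently sup_{γ>0} d(γ) = lim_{γ→∞} d(γ). -/
open Filter Matrix

open scoped MatrixOrder in
lemma psd_cs {m : ℕ} {M : Matrix (Fin m) (Fin m) ℝ} (hM : M.PosSemidef)
    (x y : Fin m → ℝ) :
    (x ⬝ᵥ M *ᵥ y) ^ 2 ≤ (x ⬝ᵥ M *ᵥ x) * (y ⬝ᵥ M *ᵥ y) := by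
  have hM0 : 0 ≤ M := Matrix.nonneg_iff_posSemidef.mpr hM
  set S := CFC.sqrt M with hS
  have hSsymm : Sᵀ = S := by
    have := (CFC.sqrt_nonneg M).isSelfAdjoint
    rw [IsSelfAdjoint, Matrix.star_eq_conjTranspose, conjTranspose_eq_transpose_of_trivial] at this
    exact this
  have key : ∀ a b : Fin m → ℝ, a ⬝ᵥ M *ᵥ b = (S *ᵥ a) ⬝ᵥ (S *ᵥ b) := by
    intro a b
    rw [← CFC.sqrt_mul_sqrt_self M hM0, ← mulVec_mulVec, dotProduct_mulVec a S,
      ← mulVec_transpose, hSsymm]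
  rw [key x y, key x x, key y y]
  have := Finset.sum_mul_sq_le_sq_mul_sq Finset.univ (S *ᵥ x) (S *ᵥ y)
  simpa [dotProduct, sq] using this

lemma inv_quad_antitone {m : ℕ} {B₁ B₂ : Matrix (Fin m) (Fin m) ℝ}
    (h1 : B₁.PosDef) (h2 : B₂.PosDef) (hle : (B₂ - B₁).PosSemidef) (f : Fin m → ℝ) :
    f ⬝ᵥ B₂⁻¹ *ᵥ f ≤ f ⬝ᵥ B₁⁻¹ *ᵥ f := by
  set u := B₂⁻¹ *ᵥ f with hu
  set v := B₁⁻¹ *ᵥ f with hv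
  have hfv : B₁ *ᵥ v = f := by
    rw [hv, mulVec_mulVec, Matrix.mul_nonsing_inv _ h1.det_pos.ne'.isUnit, one_mulVec]
  have hfu : B₂ *ᵥ u = f := by
    rw [hu, mulVec_mulVec, Matrix.mul_nonsing_inv _ h2.det_pos.ne'.isUnit, one_mulVec]
  set t := f ⬝ᵥ u with ht
  set s := f ⬝ᵥ v with hs
  have ht0 : 0 ≤ t := by
    have := h2.posSemidef.inv.dotProduct_mulVec_nonneg f
    simpa using this
  have hs0 : 0 ≤ s := by
    have := h1.posSemidef.inv.dotProduct_mulVec_nonneg f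
    simpa using this
  have htuv : t = u ⬝ᵥ B₁ *ᵥ v := by rw [hfv, ht, dotProduct_comm]
  have hsv : v ⬝ᵥ B₁ *ᵥ v = s := by rw [hfv, hs, dotProduct_comm]
  have huB2u : u ⬝ᵥ B₂ *ᵥ u = t := by rw [hfu, ht, dotProduct_comm]
  have hub : u ⬝ᵥ B₁ *ᵥ u ≤ t := by
    have := hle.dotProduct_mulVec_nonneg u
    simp only [sub_mulVec, dotProduct_sub, star_trivial] at this
    rw [huB2u] at this
    linarith
  have hcs := psd_cs h1.posSemidef u v
  rw [← htuv, hsv] at hcs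
  rcases eq_or_lt_of_le ht0 with h | h
  · rw [ht] at h; rw [hs, ht]; linarith
  · have hB1u0 : 0 ≤ u ⬝ᵥ B₁ *ᵥ u := by simpa using h1.posSemidef.dotProduct_mulVec_nonneg u
    nlinarith

lemma smul_psd {m : ℕ} {A : Matrix (Fin m) (Fin m) ℝ} (hA : A.PosSemidef)
    {c : ℝ} (hc : 0 ≤ c) : (c • A).PosSemidef := by
  refine PosSemidef.of_dotProduct_mulVec_nonneg ?_ (fun x => ?_)
  · unfold Matrix.IsHermitian
    rw [conjTranspose_smul, hA.1.eq]
    simp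
  · rw [smul_mulVec, dotProduct_smul, smul_eq_mul]
    exact mul_nonneg hc (by simpa using hA.dotProduct_mulVec_nonneg x)

lemma one_add_smul_posDef {m : ℕ} {A : Matrix (Fin m) (Fin m) ℝ} (hA : A.PosSemidef)
    {c : ℝ} (hc : 0 ≤ c) : ((1 : Matrix (Fin m) (Fin m) ℝ) + c • A).PosDef :=
  Matrix.PosDef.add_posSemidef Matrix.PosDef.one (smul_psd hA hc)

/-- the dual function is nondecreasing in γ and its supremum equals its limit. -/
theorem stmt4 (m : ℕ) (A : Matrix (Fin m) (Fin m) ℝ) (hA : A.IsSymm) (hApsd : A.PosSemidef)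
    (f : Fin m → ℝ) (d : ℝ → ℝ)
    (hd : ∀ γ : ℝ, d γ = -(1 / (4 * γ)) *
      dotProduct f (((γ⁻¹ • (1 : Matrix (Fin m) (Fin m) ℝ) + A)⁻¹).mulVec f)) :
    MonotoneOn d (Set.Ioi (0 : ℝ)) ∧
    ∀ L : ℝ, Tendsto d atTop (nhds L) → IsLUB (d '' Set.Ioi (0 : ℝ)) L := by
  -- Key reformulation: for γ > 0, d γ = -(1/4) * fᵀ (1 + γA)⁻¹ f
  have key : ∀ γ : ℝ, 0 < γ →
      d γ = -(1/4) * (f ⬝ᵥ ((1 : Matrix (Fin m) (Fin m) ℝ) + γ • A)⁻¹ *ᵥ f) := by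
    intro γ hγ
    have hγ0 : γ ≠ 0 := hγ.ne'
    set M : Matrix (Fin m) (Fin m) ℝ := 1 + γ • A with hM
    have hMpd : M.PosDef := one_add_smul_posDef hApsd hγ.le
    have hsplit : γ⁻¹ • (1 : Matrix (Fin m) (Fin m) ℝ) + A = γ⁻¹ • M := by
      rw [hM, smul_add, smul_smul, inv_mul_cancel₀ hγ0, one_smul]
    have hinv : (γ⁻¹ • M)⁻¹ = γ • M⁻¹ := by
      apply Matrix.inv_eq_right_inv
      rw [Matrix.smul_mul, Matrix.mul_smul, smul_smul, inv_mul_cancel₀ hγ0,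
        Matrix.mul_nonsing_inv _ hMpd.det_pos.ne'.isUnit, one_smul]
    rw [hd γ, hsplit, hinv]
    rw [smul_mulVec, dotProduct_smul, smul_eq_mul]
    field_simp
  have hmono : MonotoneOn d (Set.Ioi (0 : ℝ)) := by
    intro a ha b hb hab
    rw [Set.mem_Ioi] at ha hb
    rw [key a ha, key b hb]
    have h1 : ((1 : Matrix (Fin m) (Fin m) ℝ) + a • A).PosDef := one_add_smul_posDef hApsd ha.le
    have h2 : ((1 : Matrix (Fin m) (Fin m) ℝ) + b • A).PosDef := one_add_smul_posDef hApsd hb.le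
    have hsub : ((1 : Matrix (Fin m) (Fin m) ℝ) + b • A) - (1 + a • A) = (b - a) • A := by
      rw [sub_smul]; abel
    have hle : (((1 : Matrix (Fin m) (Fin m) ℝ) + b • A) - (1 + a • A)).PosSemidef := by
      rw [hsub]; exact smul_psd hApsd (by linarith)
    have := inv_quad_antitone h1 h2 hle f
    linarith
  refine ⟨hmono, fun L hL => ?_⟩
  constructor
  · rintro z ⟨x, hx, rfl⟩
    rw [Set.mem_Ioi] at hx
    refine ge_of_tendsto hL ?_
    filter_upwards [eventually_ge_atTop x] with y hy
    exact hmono (Set.mem_Ioi.mpr hx) (Set.mem_Ioi.mpr (lt_of_lt_of_le hx hy)) hy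
  · intro b hb
    refine le_of_tendsto hL ?_
    filter_upwards [eventually_ge_atTop (1 : ℝ)] with y hy
    exact hb ⟨y, Set.mem_Ioi.mpr (by linarith), rfl⟩
end

section
/- Let W be a type (parameter values), and for each w ∈ W let H̄(w) ∈ ℝ^{m×p} and F̄(w) ∈ ℝ^{m×s}. Suppose for a fixed w, rank([H̄(w) F̄(w)]) > rank(H̄(w)). Then the optimal value of the problem minimize −max_j |N F̄(w) e_j| + ‖N‖² over row vectors N ∈ ℝ^{1×m} subject to N H̄(w) = 0 is strictly negative, and in particular any optimizer N* satisfies N* F̄(w) ≠ 0. -/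
open Finset Matrix

lemma exists_left_null (m p s : ℕ) (H : Matrix (Fin m) (Fin p) ℝ)
    (F : Matrix (Fin m) (Fin s) ℝ)
    (hrank : (Matrix.fromCols H F).rank > H.rank) :
    ∃ N : Fin m → ℝ, Matrix.vecMul N H = 0 ∧ Matrix.vecMul N F ≠ 0 := by
  by_contra hc
  push_neg at hc
  -- kernels of transposes agree
  have hker : LinearMap.ker (Matrix.fromCols H F)ᵀ.mulVecLin
      = LinearMap.ker Hᵀ.mulVecLin := by
    ext N
    simp only [LinearMap.mem_ker, Matrix.mulVecLin_apply, ← Matrix.vecMul_transpose,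
      Matrix.transpose_transpose, Matrix.vecMul_fromCols]
    constructor
    · intro h
      have hH : Matrix.vecMul N H = 0 := funext fun i => congrFun h (Sum.inl i)
      exact hH
    · intro h
      have h2 := hc N h
      rw [h, h2]
      exact Sum.elim_zero_zero
  have h1 : (Matrix.fromCols H F)ᵀ.rank = Hᵀ.rank := by
    have e1 := LinearMap.finrank_range_add_finrank_ker (Matrix.fromCols H F)ᵀ.mulVecLin
    have e2 := LinearMap.finrank_range_add_finrank_ker Hᵀ.mulVecLin
    rw [hker] at e1
    unfold Matrix.rank
    omega
  rw [Matrix.rank_transpose, Matrix.rank_transpose] at h1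
  omega

/-- under the isolability rank condition, the QP of Proposition 1 has a
strictly negative optimal value and any optimizer is fault-sensitive. -/
theorem stmt14 (W : Type*) (m p s : ℕ)
    (Hbar : W → Matrix (Fin m) (Fin p) ℝ) (Fbar : W → Matrix (Fin m) (Fin s) ℝ)
    (w : W) (hrank : (Matrix.fromCols (Hbar w) (Fbar w)).rank > (Hbar w).rank)
    (φ : (Fin m → ℝ) → ℝ)
    (hφ : ∀ N : Fin m → ℝ,
      φ N = -(⨆ j : Fin s, |Matrix.vecMul N (Fbar w) j|) + ∑ i, (N i) ^ 2) :
    (∃ N : Fin m → ℝ, Matrix.vecMul N (Hbar w) = 0 ∧ φ N < 0) ∧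
    (∀ Nstar : Fin m → ℝ,
      (Matrix.vecMul Nstar (Hbar w) = 0 ∧
        ∀ N : Fin m → ℝ, Matrix.vecMul N (Hbar w) = 0 → φ Nstar ≤ φ N) →
      Matrix.vecMul Nstar (Fbar w) ≠ 0) := by
  obtain ⟨N0, hN0H, hN0F⟩ := exists_left_null m p s (Hbar w) (Fbar w) hrank
  obtain ⟨j0, hj0⟩ : ∃ j, Matrix.vecMul N0 (Fbar w) j ≠ 0 := by
    by_contra h; push_neg at h; exact hN0F (funext h)
  set c : ℝ := |Matrix.vecMul N0 (Fbar w) j0| with hc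
  have hcpos : 0 < c := abs_pos.mpr hj0
  set b : ℝ := ∑ i, (N0 i) ^ 2 with hb
  have hbpos : 0 < b := by
    have hN0 : N0 ≠ 0 := by rintro rfl; simp [Matrix.zero_vecMul] at hN0F
    have : ∃ i, N0 i ≠ 0 := by
      by_contra h; push_neg at h; exact hN0 (funext h)
    obtain ⟨i, hi⟩ := this
    exact Finset.sum_pos' (fun i _ => sq_nonneg _) ⟨i, Finset.mem_univ i, by positivity⟩
  set t : ℝ := c / (2 * b) with ht
  have htpos : 0 < t := by positivity
  have key : ∀ (tt : ℝ), 0 < tt → Matrix.vecMul (tt • N0) (Hbar w) = 0 ∧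
      φ (tt • N0) ≤ -tt * c + tt ^ 2 * b := by
    intro tt htt
    constructor
    · rw [Matrix.smul_vecMul, hN0H, smul_zero]
    · rw [hφ]
      have hsum : ∑ i, ((tt • N0) i) ^ 2 = tt ^ 2 * b := by
        simp [hb, Finset.mul_sum, mul_pow]
      rw [hsum]
      have hsup : tt * c ≤ ⨆ j : Fin s, |Matrix.vecMul (tt • N0) (Fbar w) j| := by
        have hle : |Matrix.vecMul (tt • N0) (Fbar w) j0|
            ≤ ⨆ j : Fin s, |Matrix.vecMul (tt • N0) (Fbar w) j| :=
          le_ciSup (f := fun j => |Matrix.vecMul (tt • N0) (Fbar w) j|)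
            (Set.Finite.bddAbove (Set.finite_range _)) j0
        have : |Matrix.vecMul (tt • N0) (Fbar w) j0| = tt * c := by
          rw [Matrix.smul_vecMul]
          simp [hc, abs_mul, abs_of_pos htt]
        linarith
      linarith
  have hmain : ∃ N : Fin m → ℝ, Matrix.vecMul N (Hbar w) = 0 ∧ φ N < 0 := by
    refine ⟨t • N0, (key t htpos).1, lt_of_le_of_lt (key t htpos).2 ?_⟩
    have : -t * c + t ^ 2 * b = -(c ^ 2 / (4 * b)) := by
      rw [ht]; field_simp; ring
    rw [this]
    have : 0 < c ^ 2 / (4 * b) := by positivity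
    linarith
  refine ⟨hmain, ?_⟩
  rintro Nstar ⟨hfeas, hopt⟩ hFzero
  obtain ⟨N, hNH, hNφ⟩ := hmain
  have h1 : φ Nstar ≤ φ N := hopt N hNH
  have h2 : 0 ≤ φ Nstar := by
    rw [hφ]
    simp only [hFzero, Pi.zero_apply, abs_zero, Real.iSup_const_zero, neg_zero, zero_add]
    exact Finset.sum_nonneg fun i _ => sq_nonneg _
  linarith
end
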